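/- If θ is a sub-multiplicative potential on Σ_* and ν is any shift-invariant Borel probability measure on Σ, then P(θ) ≥ h(ν) + Λ(θ,ν), i.e. the pressure dominates entropy plus the Lyapunov exponent of the potential. -/

import Mathlib

open MeasureTheory Filter Topology

/-- The prefix of length `n` of an infinite word in the shift space `{1,…,N}^ℕ`. -/
def wordPrefix {N : ℕ} (x : ℕ → Fin N) (n : ℕ) : List (Fin N) :=
  List.ofFn fun k : Fin n => x k

/-- The left shift on the full shift space. -/
def shiftMap (N : ℕ) : (ℕ → Fin N) → ℕ → Fin N := fun x n => x (n + 1)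

/-- The measure of the cylinder set `[w]` as a real number. -/
noncomputable def cylMass {N : ℕ} (μ : Measure (ℕ → Fin N)) (w : List (Fin N)) : ℝ :=
  (μ {x | wordPrefix x w.length = w}).toReal

/-- The Kolmogorov–Sinai entropy `h(ν) = inf_n -(1/n) Σ_{|w|=n} ν[w] log ν[w]`. -/
noncomputable def entropyInv {N : ℕ} (ν : Measure (ℕ → Fin N)) : ℝ :=
  ⨅ n : ℕ+, -((n : ℝ)⁻¹) * ∑ w : Fin (n : ℕ) → Fin N,
    cylMass ν (List.ofFn w) * Real.log (cylMass ν (List.ofFn w))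

/-- `Λ(θ,ν) = inf_n (1/n) ∫ log θ(i|_n) dν(i)`, as an extended real number. -/
noncomputable def LyapE {N : ℕ} (θ : List (Fin N) → ℝ) (ν : Measure (ℕ → Fin N)) : EReal :=
  ⨅ n : ℕ+, (((n : ℝ)⁻¹ * ∫ x, Real.log (θ (wordPrefix x n)) ∂ν : ℝ) : EReal)

/-- The pressure `P(θ) = inf_n (1/n) log Σ_{|w|=n} θ(w)`, as an extended real number. -/
noncomputable def pressureE {N : ℕ} (θ : List (Fin N) → ℝ) : EReal :=
  ⨅ n : ℕ+, (((n : ℝ)⁻¹ * Real.log (∑ w : Fin (n : ℕ) → Fin N, θ (List.ofFn w)) : ℝ) : EReal)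

/-- Gibbs' inequality. -/
lemma gibbs_ineq {ι : Type*} [Fintype ι] (p q : ι → ℝ) (hp : ∀ i, 0 ≤ p i)
    (hq : ∀ i, 0 < q i) (hsum : ∑ i, p i = 1) :
    ∑ i, p i * Real.log (q i) - ∑ i, p i * Real.log (p i) ≤ Real.log (∑ i, q i) := by
  classical
  set S : Finset ι := Finset.univ.filter (fun i => p i ≠ 0) with hS
  have hSsum : ∑ i ∈ S, p i = 1 := by
    rw [hS, Finset.sum_filter_ne_zero]; exact hsum
  have hpS : ∀ i ∈ S, 0 < p i := by
    intro i hi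
    rcases (hp i).lt_or_eq with h | h
    · exact h
    · exact absurd h.symm (Finset.mem_filter.mp hi).2
  have hjensen := (strictConcaveOn_log_Ioi.concaveOn).le_map_sum
    (t := S) (w := p) (p := fun i => q i / p i)
    (fun i _ => hp i) hSsum
    (fun i hi => Set.mem_Ioi.mpr (div_pos (hq i) (hpS i hi)))
  have hrw : ∑ i ∈ S, p i • (q i / p i) = ∑ i ∈ S, q i := by
    refine Finset.sum_congr rfl fun i hi => ?_
    rw [smul_eq_mul, mul_div_cancel₀ _ (hpS i hi).ne']
  have hlhs : ∑ i ∈ S, p i • Real.log (q i / p i)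
      = ∑ i, p i * Real.log (q i) - ∑ i, p i * Real.log (p i) := by
    rw [← Finset.sum_sub_distrib]
    rw [← Finset.sum_filter_of_ne (p := fun i => p i ≠ 0)
      (f := fun i => p i * Real.log (q i) - p i * Real.log (p i)) ?_]
    · refine Finset.sum_congr rfl fun i hi => ?_
      rw [smul_eq_mul, Real.log_div (hq i).ne' (hpS i hi).ne', mul_sub]
    · intro i _ h
      intro hp0
      apply h; simp [hp0]
  have hne : S.Nonempty := by
    by_contra h
    rw [Finset.not_nonempty_iff_eq_empty] at h
    rw [h, Finset.sum_empty] at hSsum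
    norm_num at hSsum
  have hposS : 0 < ∑ i ∈ S, q i := Finset.sum_pos (fun i _ => hq i) hne
  calc ∑ i, p i * Real.log (q i) - ∑ i, p i * Real.log (p i)
      = ∑ i ∈ S, p i • Real.log (q i / p i) := hlhs.symm
    _ ≤ Real.log (∑ i ∈ S, p i • (q i / p i)) := hjensen
    _ = Real.log (∑ i ∈ S, q i) := by rw [hrw]
    _ ≤ Real.log (∑ i, q i) := Real.log_le_log hposS
        (Finset.sum_le_sum_of_subset_of_nonneg (Finset.subset_univ S)
          (fun i _ _ => (hq i).le))

section aux
variable {N : ℕ} (ν : Measure (ℕ → Fin N)) [IsProbabilityMeasure ν] (n : ℕ)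

/-- The projection to the first `n` coordinates. -/
def proj (N n : ℕ) : (ℕ → Fin N) → (Fin n → Fin N) := fun x k => x k

lemma proj_measurable : Measurable (proj N n) :=
  measurable_pi_lambda _ fun k => measurable_pi_apply _

lemma cylMass_eq (w : Fin n → Fin N) :
    cylMass ν (List.ofFn w) = ((ν.map (proj N n)) {w}).toReal := by
  rw [Measure.map_apply (proj_measurable (N := N) n) (measurableSet_singleton w)]
  unfold cylMass
  congr 2
  ext x
  simp only [Set.mem_setOf_eq, Set.mem_preimage, Set.mem_singleton_iff,
    List.length_ofFn, wordPrefix, proj]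
  rw [List.ofFn_inj]
  constructor
  · intro h; funext k; exact h ▸ rfl
  · intro h; exact h ▸ rfl

lemma integral_prefix (g : (Fin n → Fin N) → ℝ) :
    ∫ x, g (proj N n x) ∂ν = ∑ w : Fin n → Fin N, cylMass ν (List.ofFn w) * g w := by
  have : IsProbabilityMeasure (ν.map (proj N n)) :=
    Measure.isProbabilityMeasure_map (proj_measurable (N := N) n).aemeasurable
  rw [← integral_map (proj_measurable (N := N) n).aemeasurable
    (by exact (measurable_of_countable g).aestronglyMeasurable)]
  rw [integral_fintype _]
  refine Finset.sum_congr rfl fun w _ => ?_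
  rw [cylMass_eq, smul_eq_mul, Measure.real]
  exact Integrable.of_finite

lemma sum_cylMass : ∑ w : Fin n → Fin N, cylMass ν (List.ofFn w) = 1 := by
  have h := integral_prefix ν n (fun _ => (1 : ℝ))
  simpa using h.symm

end aux

/-- For a sub-multiplicative positive potential `θ` and any shift-invariant
Borel probability measure `ν`, the pressure dominates entropy plus the Lyapunov exponent:
`P(θ) ≥ h(ν) + Λ(θ,ν)`. -/
theorem stmt_6 {N : ℕ}
    (θ : List (Fin N) → ℝ)
    (hpos : ∀ w, 0 < θ w)
    (hsub : ∀ u v : List (Fin N), θ (u ++ v) ≤ θ u * θ v)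
    (ν : Measure (ℕ → Fin N)) [IsProbabilityMeasure ν]
    (hinv : MeasurePreserving (shiftMap N) ν ν) :
    (entropyInv ν : EReal) + LyapE θ ν ≤ pressureE θ := by
  rw [pressureE]
  refine le_iInf fun n => ?_
  set p : (Fin (n:ℕ) → Fin N) → ℝ := fun w => cylMass ν (List.ofFn w) with hp
  have hpnn : ∀ w, 0 ≤ p w := fun w => ENNReal.toReal_nonneg
  have hple : ∀ w, p w ≤ 1 := fun w =>
    ENNReal.toReal_le_of_le_ofReal one_pos.le (by simpa using prob_le_one (μ := ν))
  -- entropy bound at level n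
  have hbdd : BddBelow (Set.range fun m : ℕ+ =>
      -((m : ℝ)⁻¹) * ∑ w : Fin (m : ℕ) → Fin N,
        cylMass ν (List.ofFn w) * Real.log (cylMass ν (List.ofFn w))) := by
    refine ⟨0, fun y hy => ?_⟩
    obtain ⟨m, rfl⟩ := hy
    dsimp only
    rw [neg_mul, le_neg, neg_zero]
    apply mul_nonpos_of_nonneg_of_nonpos (by positivity)
    apply Finset.sum_nonpos fun w _ => ?_
    apply mul_nonpos_of_nonneg_of_nonpos ENNReal.toReal_nonneg
    apply Real.log_nonpos ENNReal.toReal_nonneg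
    exact ENNReal.toReal_le_of_le_ofReal one_pos.le (by simpa using prob_le_one (μ := ν))
  have hE : entropyInv ν ≤ -((n : ℝ)⁻¹) * ∑ w : Fin (n:ℕ) → Fin N,
      p w * Real.log (p w) := ciInf_le hbdd n
  have hL : LyapE θ ν ≤ (((n : ℝ)⁻¹ * ∫ x, Real.log (θ (wordPrefix x n)) ∂ν : ℝ) : EReal) :=
    iInf_le _ n
  -- compute the integral
  have hint : ∫ x, Real.log (θ (wordPrefix x n)) ∂ν
      = ∑ w : Fin (n:ℕ) → Fin N, p w * Real.log (θ (List.ofFn w)) := by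
    have := integral_prefix ν n (fun w => Real.log (θ (List.ofFn w)))
    rw [← this]
    rfl
  -- the key real inequality
  have key : -((n : ℝ)⁻¹) * (∑ w : Fin (n:ℕ) → Fin N, p w * Real.log (p w))
      + (n : ℝ)⁻¹ * (∑ w : Fin (n:ℕ) → Fin N, p w * Real.log (θ (List.ofFn w)))
      ≤ (n : ℝ)⁻¹ * Real.log (∑ w : Fin (n:ℕ) → Fin N, θ (List.ofFn w)) := by
    have hg := gibbs_ineq p (fun w => θ (List.ofFn w)) hpnn (fun w => hpos _)
      (sum_cylMass ν n)
    have hn : (0:ℝ) < ((n:ℕ):ℝ)⁻¹ := by positivity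
    calc -((n : ℝ)⁻¹) * (∑ w, p w * Real.log (p w))
        + (n : ℝ)⁻¹ * (∑ w, p w * Real.log (θ (List.ofFn w)))
        = (n : ℝ)⁻¹ * (∑ w, p w * Real.log (θ (List.ofFn w))
            - ∑ w, p w * Real.log (p w)) := by ring
      _ ≤ (n : ℝ)⁻¹ * Real.log (∑ w, θ (List.ofFn w)) :=
          mul_le_mul_of_nonneg_left hg hn.le
  calc (entropyInv ν : EReal) + LyapE θ ν
      ≤ ((-((n : ℝ)⁻¹) * ∑ w : Fin (n:ℕ) → Fin N, p w * Real.log (p w) : ℝ) : EReal)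
        + (((n : ℝ)⁻¹ * ∫ x, Real.log (θ (wordPrefix x n)) ∂ν : ℝ) : EReal) := by
        exact add_le_add (EReal.coe_le_coe_iff.mpr hE) hL
    _ = (((-((n : ℝ)⁻¹) * ∑ w : Fin (n:ℕ) → Fin N, p w * Real.log (p w))
        + (n : ℝ)⁻¹ * ∫ x, Real.log (θ (wordPrefix x n)) ∂ν : ℝ) : EReal) := by
        rw [← EReal.coe_add]
    _ ≤ (((n : ℝ)⁻¹ * Real.log (∑ w : Fin (n:ℕ) → Fin N, θ (List.ofFn w)) : ℝ) : EReal) := by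
        rw [EReal.coe_le_coe_iff, hint]
        exact key
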